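/- Let 𝒥_1 be the set of paths of length n ≥ 0 with n ≠ 1 given by (UD)^{n/2} if n is even, and (UD)^{(n−3)/2}UUC_2 if n is odd (n ≥ 3). Let 𝒥 be the union of 𝒥_1 with the set of paths of the form α_1U^{k_1+1}DC_{k_1}α_2U^{k_2+1}DC_{k_2}⋯α_rU^{k_r+1}DC_{k_r}α_{r+1} where r ≥ 1, k_i ≥ 2 for 1 ≤ i ≤ r, and all α_i are in 𝒥_1. Then for every path P ∈ ℰ there exists exactly one path Q ∈ 𝒥 with |Q| = |P| such that P and Q are DC-equivalent. In other words, 𝒥 is a complete set of representatives of the DC-equivalence classes of ℰ. -/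

import Mathlib

/-- Steps of a Dyck path with catastrophes: up-step `U`, down-step `D`,
and catastrophe step `C k` of size `k` (valid paths only use `k ≥ 2`). -/
inductive Step where
  | U : Step
  | D : Step
  | C : ℕ → Step
  deriving DecidableEq

/-- The vertical displacement of a step. -/
def Step.val : Step → ℤ
  | .U => 1
  | .D => -1
  | .C k => -(k : ℤ)

/-- The height (ordinate) of the path after its first `i` steps. -/
def hgt (P : List Step) (i : ℕ) : ℤ := ((P.take i).map Step.val).sum

/-- `InE P` means `P` is a Dyck path with catastrophes (a member of ℰ):
it stays at height ≥ 0, ends on the x-axis, and every catastrophe step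
`C k` has `k ≥ 2` and starts at height `k` (hence ends on the x-axis). -/
def InE (P : List Step) : Prop :=
  (∀ i, 0 ≤ hgt P i) ∧ hgt P P.length = 0 ∧
    ∀ i k, P[i]? = some (Step.C k) → 2 ≤ k ∧ hgt P i = (k : ℤ)

/-- `(UD)^k`. -/
def UDpow (k : ℕ) : List Step := (List.replicate k [Step.U, Step.D]).flatten

/-- `(DU)^k`. -/
def DUpow (k : ℕ) : List Step := (List.replicate k [Step.D, Step.U]).flatten

/-- `U^k`. -/
def Upow (k : ℕ) : List Step := List.replicate k Step.U

/-- `C_s` with the convention `C_1 = D`. -/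
def cfin (s : ℕ) : Step := if s = 1 then Step.D else Step.C s

/-- Test whether a step is a catastrophe step. -/
def isCatB : Step → Bool
  | .C _ => true
  | _ => false

/-- The number of catastrophe steps in a path. -/
def catCount (P : List Step) : ℕ := P.countP isCatB

/-- Two paths are `DC`-equivalent when, for every `k ≥ 2`, the occurrences of
the pattern `D C_k` appear at the same positions in both paths. -/
def DCEquiv (P Q : List Step) : Prop :=
  ∀ k, 2 ≤ k → ∀ i : ℕ,
    (P[i]? = some Step.D ∧ P[i + 1]? = some (Step.C k)) ↔
    (Q[i]? = some Step.D ∧ Q[i + 1]? = some (Step.C k))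

/-- Membership in 𝒥₁ : paths `(UD)^{n/2}` for even `n ≥ 0`, and
`(UD)^{(n-3)/2} UU C_2` for odd `n ≥ 3`. -/
def InJ1 (P : List Step) : Prop :=
  (∃ k, P = UDpow k) ∨ (∃ k, P = UDpow k ++ [Step.U, Step.U, Step.C 2])

/-- Membership in 𝒥 : union of 𝒥₁ with the set of paths of the form
`α_1 U^{k_1+1} D C_{k_1} ⋯ α_r U^{k_r+1} D C_{k_r} α_{r+1}` with `r ≥ 1`,
all `k_i ≥ 2` and all `α_i ∈ 𝒥₁` (the case `r = 0` giving 𝒥₁). -/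
def InJ (P : List Step) : Prop :=
  ∃ (L : List (List Step × ℕ)) (b : List Step),
    (∀ t ∈ L, InJ1 t.1 ∧ 2 ≤ t.2) ∧ InJ1 b ∧
    P = (L.map (fun t => t.1 ++ Upow (t.2 + 1) ++ [Step.D, Step.C t.2])).flatten ++ b

def OccAt (P : List Step) (i k : ℕ) : Prop :=
  P[i]? = some Step.D ∧ P[i + 1]? = some (Step.C k)

lemma hgt_zero (P : List Step) : hgt P 0 = 0 := rfl

lemma hgt_append (A B : List Step) (i : ℕ) :
    hgt (A ++ B) i = hgt A i + hgt B (i - A.length) := by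
  unfold hgt
  rw [List.take_append, List.map_append, List.sum_append]

lemma hgt_of_length_le {A : List Step} {i : ℕ} (h : A.length ≤ i) :
    hgt A i = hgt A A.length := by
  unfold hgt; rw [List.take_of_length_le h, List.take_length]

lemma hgt_succ {P : List Step} {i : ℕ} {s : Step} (h : P[i]? = some s) :
    hgt P (i + 1) = hgt P i + s.val := by
  unfold hgt
  rw [List.take_succ, h]
  simp

lemma sum_val_le_length (l : List Step) : (l.map Step.val).sum ≤ l.length := by
  induction l with
  | nil => simp
  | cons x t ih =>
    have : x.val ≤ 1 := by cases x <;> simp [Step.val] <;> omega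
    simp only [List.map_cons, List.sum_cons, List.length_cons]
    push_cast
    omega

lemma sum_val_ne (l : List Step) (hC : ∀ k, Step.C k ∈ l → 2 ≤ k) :
    (l.map Step.val).sum ≠ (l.length : ℤ) - 1 := by
  induction l with
  | nil => simp
  | cons x t ih =>
    intro h
    simp only [List.map_cons, List.sum_cons, List.length_cons] at h
    have ht := sum_val_le_length t
    have hx : x.val = 1 ∨ x.val ≤ -1 := by
      cases x with
      | U => left; rfl
      | D => right; simp [Step.val]
      | C k =>
        right
        have : 2 ≤ k := hC k (List.mem_cons_self)
        simp [Step.val]; omega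
    rcases hx with hx | hx
    · exact ih (fun k hk => hC k (List.mem_cons_of_mem _ hk)) (by push_cast at h ⊢; omega)
    · push_cast at h; omega

lemma InE_memC {P : List Step} (hP : InE P) {k : ℕ} (h : Step.C k ∈ P) : 2 ≤ k := by
  obtain ⟨i, hi⟩ := List.mem_iff_getElem?.mp h
  exact (hP.2.2 i k hi).1

lemma hgt_ne_sub_one {P : List Step} (hP : InE P) {i : ℕ} (hi : i ≤ P.length) :
    hgt P i ≠ (i : ℤ) - 1 := by
  have hlen : (P.take i).length = i := by simp [List.length_take]; omega
  have := sum_val_ne (P.take i)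
    (fun k hk => InE_memC hP ((P.take_sublist i).mem hk))
  intro hcon
  apply this
  rw [hlen]
  unfold hgt at hcon
  exact hcon

lemma hgt_le {P : List Step} {i : ℕ} (h : i ≤ P.length) : hgt P i ≤ i := by
  have hlen : (P.take i).length = i := by simp [List.length_take]; omega
  have := sum_val_le_length (P.take i)
  rw [hlen] at this; exact this

lemma InE_length_ne_one {P : List Step} (hP : InE P) : P.length ≠ 1 := by
  intro h
  have := hP.2.1
  rw [h] at this
  exact hgt_ne_sub_one (i := 1) hP (by omega) (by rw [this]; norm_num)

lemma InE_nil : InE ([] : List Step) :=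
  ⟨fun i => by simp [hgt], by simp [hgt], by simp⟩

lemma InE_append {A B : List Step} (hA : InE A) (hB : InE B) : InE (A ++ B) := by
  refine ⟨?_, ?_, ?_⟩
  · intro i
    rw [hgt_append]
    rcases le_or_gt i A.length with h | h
    · have : i - A.length = 0 := by omega
      rw [this, hgt_zero]
      simpa using hA.1 i
    · have : hgt A i = 0 := by rw [hgt_of_length_le (by omega), hA.2.1]
      rw [this]
      simpa using hB.1 _
  · rw [hgt_append, List.length_append]
    have h1 : hgt A (A.length + B.length) = 0 := by
      rw [hgt_of_length_le (by omega), hA.2.1]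
    have h2 : A.length + B.length - A.length = B.length := by omega
    rw [h1, h2, hB.2.1]; ring
  · intro i k h
    rw [List.getElem?_append] at h
    split at h
    · obtain ⟨hk, hh⟩ := hA.2.2 i k h
      refine ⟨hk, ?_⟩
      rw [hgt_append]
      have : i - A.length = 0 := by omega
      rw [this, hgt_zero, hh]; ring
    · rename_i hi
      obtain ⟨hk, hh⟩ := hB.2.2 _ k h
      refine ⟨hk, ?_⟩
      rw [hgt_append]
      have : hgt A i = 0 := by rw [hgt_of_length_le (by omega), hA.2.1]
      rw [this, hh]; ring

lemma hgt_drop {P : List Step} {m : ℕ} (hm : m ≤ P.length) (i : ℕ) :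
    hgt (P.drop m) i = hgt P (m + i) - hgt P m := by
  have h := hgt_append (P.take m) (P.drop m) (m + i)
  rw [List.take_append_drop] at h
  have hl : (P.take m).length = m := by simp [List.length_take]; omega
  have h1 : hgt (P.take m) (m + i) = hgt P m := by
    unfold hgt
    rw [List.take_take, Nat.min_eq_right (by omega)]
  rw [hl, h1] at h
  have h2 : m + i - m = i := by omega
  rw [h2] at h
  linarith

lemma InE_drop {P : List Step} {m : ℕ} (hP : InE P) (hm : m ≤ P.length)
    (h0 : hgt P m = 0) : InE (P.drop m) := by
  refine ⟨?_, ?_, ?_⟩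
  · intro i
    rw [hgt_drop hm, h0]
    simpa using hP.1 _
  · rw [List.length_drop, hgt_drop hm, h0]
    have : m + (P.length - m) = P.length := by omega
    rw [this, hP.2.1]; ring
  · intro i k h
    rw [List.getElem?_drop] at h
    obtain ⟨hk, hh⟩ := hP.2.2 _ k h
    exact ⟨hk, by rw [hgt_drop hm, h0, hh]; ring⟩

lemma UDpow_succ (k : ℕ) : UDpow (k + 1) = [Step.U, Step.D] ++ UDpow k := by
  simp [UDpow, List.replicate_succ]

lemma length_UDpow (k : ℕ) : (UDpow k).length = 2 * k := by
  induction k with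
  | zero => simp [UDpow]
  | succ n ih => rw [UDpow_succ]; simp [ih]; omega

lemma mem_UDpow {s : Step} {k : ℕ} (h : s ∈ UDpow k) : s = Step.U ∨ s = Step.D := by
  simp only [UDpow, List.mem_flatten, List.mem_replicate] at h
  obtain ⟨l, ⟨-, rfl⟩, hs⟩ := h
  simpa using hs

lemma InE_UD : InE [Step.U, Step.D] := by
  refine ⟨?_, by simp [hgt, Step.val], ?_⟩
  · intro i
    match i with
    | 0 => simp [hgt]
    | 1 => simp [hgt, Step.val]
    | (n+2) =>
      rw [hgt_of_length_le (by simp)]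
      simp [hgt, Step.val]
  · intro i k h
    have := List.mem_of_getElem? h
    simp at this

lemma InE_UDpow (k : ℕ) : InE (UDpow k) := by
  induction k with
  | zero => simpa [UDpow] using InE_nil
  | succ n ih => rw [UDpow_succ]; exact InE_append InE_UD ih

lemma InE_UUC2 : InE [Step.U, Step.U, Step.C 2] := by
  refine ⟨?_, by simp [hgt, Step.val], ?_⟩
  · intro i
    match i with
    | 0 => simp [hgt]
    | 1 => simp [hgt, Step.val]
    | 2 => simp [hgt, Step.val]
    | (n+3) =>
      rw [hgt_of_length_le (by simp)]
      simp [hgt, Step.val]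
  · intro i k h
    match i with
    | 0 => simp at h
    | 1 => simp at h
    | 2 =>
      simp at h
      subst h
      exact ⟨le_refl 2, by simp [hgt, Step.val]⟩
    | (n+3) => simp at h

lemma InJ1_InE {α : List Step} (h : InJ1 α) : InE α := by
  rcases h with ⟨k, rfl⟩ | ⟨k, rfl⟩
  · exact InE_UDpow k
  · exact InE_append (InE_UDpow k) InE_UUC2

lemma getElem?_UUC2 (i : ℕ) :
    ([Step.U, Step.U, Step.C 2] : List Step)[i]? =
      if i = 0 then some Step.U else if i = 1 then some Step.U
      else if i = 2 then some (Step.C 2) else none := by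
  match i with
  | 0 => simp
  | 1 => simp
  | 2 => simp
  | (n+3) => simp

lemma InJ1_no_occ {α : List Step} (h : InJ1 α) (i k : ℕ) : ¬ OccAt α i k := by
  rintro ⟨h1, h2⟩
  rcases h with ⟨m, rfl⟩ | ⟨m, rfl⟩
  · rcases mem_UDpow (List.mem_of_getElem? h2) with h | h <;> exact Step.noConfusion h
  · rw [List.getElem?_append] at h1 h2
    by_cases hc : i + 1 < (UDpow m).length
    · rw [if_pos hc] at h2
      rcases mem_UDpow (List.mem_of_getElem? h2) with h | h <;> exact Step.noConfusion h
    · rw [if_neg hc] at h2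
      push_neg at hc
      rcases hn : (i + 1 - (UDpow m).length) with _ | _ | _ | n <;> rw [hn] at h2 <;>
        simp at h2
      have hil : ¬ i < (UDpow m).length := by omega
      rw [if_neg hil] at h1
      have hi1 : i - (UDpow m).length = 1 := by omega
      rw [hi1] at h1
      simp at h1

lemma length_InJ1 {α : List Step} (h : InJ1 α) :
    (∃ k, α = UDpow k ∧ α.length = 2 * k) ∨
    (∃ k, α = UDpow k ++ [Step.U, Step.U, Step.C 2] ∧ α.length = 2 * k + 3) := by
  rcases h with ⟨k, rfl⟩ | ⟨k, rfl⟩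
  · exact Or.inl ⟨k, rfl, length_UDpow k⟩
  · exact Or.inr ⟨k, rfl, by simp [length_UDpow]⟩

lemma InJ1_eq_of_length {α β : List Step} (ha : InJ1 α) (hb : InJ1 β)
    (h : α.length = β.length) : α = β := by
  rcases length_InJ1 ha with ⟨k, rfl, hk⟩ | ⟨k, rfl, hk⟩ <;>
    rcases length_InJ1 hb with ⟨m, rfl, hm⟩ | ⟨m, rfl, hm⟩
  · have : k = m := by omega
    rw [this]
  · omega
  · omega
  · have : k = m := by omega
    rw [this]

lemma InJ1_length_ne_one {α : List Step} (h : InJ1 α) : α.length ≠ 1 := by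
  rcases length_InJ1 h with ⟨k, -, hk⟩ | ⟨k, -, hk⟩ <;> omega

def j1 (n : ℕ) : List Step :=
  if n % 2 = 0 then UDpow (n / 2) else UDpow ((n - 3) / 2) ++ [Step.U, Step.U, Step.C 2]

lemma InJ1_j1 (n : ℕ) : InJ1 (j1 n) := by
  unfold j1; split
  · exact Or.inl ⟨_, rfl⟩
  · exact Or.inr ⟨_, rfl⟩

lemma length_j1 {n : ℕ} (h : n ≠ 1) : (j1 n).length = n := by
  unfold j1; split
  · rw [length_UDpow]; omega
  · simp [length_UDpow]; omega

def tail2 (k : ℕ) : List Step := Upow (k + 1) ++ [Step.D, Step.C k]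

lemma length_Upow (n : ℕ) : (Upow n).length = n := by simp [Upow]

lemma length_tail2 (k : ℕ) : (tail2 k).length = k + 3 := by simp [tail2, Upow]

lemma hgt_Upow (n i : ℕ) : hgt (Upow n) i = min i n := by
  unfold hgt Upow
  rw [List.take_replicate, List.map_replicate, List.sum_replicate]
  simp [Step.val]

lemma hgt_DC (k : ℕ) (j : ℕ) :
    hgt [Step.D, Step.C k] j = if j = 0 then 0 else if j = 1 then -1 else -1 - (k : ℤ) := by
  rcases j with _ | _ | n
  · simp [hgt]
  · simp [hgt, Step.val]
  · rw [if_neg (by omega), if_neg (by omega), hgt_of_length_le (by simp)]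
    simp [hgt, Step.val]
    omega

lemma getElem?_tail2 (k i : ℕ) :
    (tail2 k)[i]? = if i < k + 1 then some Step.U
      else if i = k + 1 then some Step.D
      else if i = k + 2 then some (Step.C k) else none := by
  rw [tail2, List.getElem?_append, length_Upow]
  by_cases h : i < k + 1
  · rw [if_pos h, if_pos h]
    simp [Upow, List.getElem?_replicate, h]
  · rw [if_neg h, if_neg h]
    rcases hn : i - (k + 1) with _ | _ | n
    · have h1 : i = k + 1 := by omega
      simp [h1]
    · have h2 : i = k + 2 := by omega
      rw [if_neg (by omega), if_pos h2]
      simp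
    · rw [if_neg (by omega), if_neg (by omega)]
      simp

lemma InE_tail2 {k : ℕ} (hk : 2 ≤ k) : InE (tail2 k) := by
  refine ⟨?_, ?_, ?_⟩
  · intro i
    rw [tail2, hgt_append, hgt_Upow, length_Upow, hgt_DC]
    split_ifs <;> push_cast <;> omega
  · rw [length_tail2, tail2, hgt_append, hgt_Upow, length_Upow, hgt_DC]
    split_ifs <;> push_cast <;> omega
  · intro i k' h
    rw [getElem?_tail2] at h
    split_ifs at h with h1 h2 h3
    all_goals simp only [Option.some.injEq, Step.C.injEq, reduceCtorEq] at h
    subst h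
    refine ⟨hk, ?_⟩
    rw [tail2, hgt_append, hgt_Upow, length_Upow, hgt_DC, h3]
    have e1 : min (k + 2) (k + 1) = k + 1 := by omega
    have e2 : k + 2 - (k + 1) = 1 := by omega
    rw [e1, e2]
    norm_num

lemma getElem?_block (α : List Step) (k : ℕ) (R : List Step) (j : ℕ) :
    (α ++ (tail2 k ++ R))[j]? =
      if j < α.length then α[j]?
      else if j < α.length + (k + 1) then some Step.U
      else if j = α.length + k + 1 then some Step.D
      else if j = α.length + k + 2 then some (Step.C k)
      else R[j - (α.length + k + 3)]? := by
  rw [List.getElem?_append]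
  by_cases h : j < α.length
  · rw [if_pos h, if_pos h]
  · rw [if_neg h, if_neg h, List.getElem?_append, length_tail2, getElem?_tail2]
    push_neg at h
    by_cases h1 : j - α.length < k + 3
    · rw [if_pos h1]
      split_ifs <;> first | rfl | omega
    · rw [if_neg h1]
      push_neg at h1
      rw [if_neg (by omega), if_neg (by omega), if_neg (by omega)]
      congr 1
      omega

lemma occ_block {α : List Step} (hα : ∀ i k', ¬ OccAt α i k') (k : ℕ) (R : List Step)
    (i k' : ℕ) :
    OccAt (α ++ (tail2 k ++ R)) i k' ↔
      (i = α.length + k + 1 ∧ k' = k) ∨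
      (α.length + k + 3 ≤ i ∧ OccAt R (i - (α.length + k + 3)) k') := by
  unfold OccAt
  rw [getElem?_block, getElem?_block]
  constructor
  · rintro ⟨h1, h2⟩
    by_cases c1 : i < α.length
    · rw [if_pos c1] at h1
      by_cases d1 : i + 1 < α.length
      · rw [if_pos d1] at h2
        exact absurd ⟨h1, h2⟩ (hα i k')
      · rw [if_neg d1, if_pos (by omega : i + 1 < α.length + (k + 1))] at h2
        exact absurd h2 (by simp)
    · rw [if_neg c1] at h1
      by_cases c2 : i < α.length + (k + 1)
      · rw [if_pos c2] at h1
        exact absurd h1 (by simp)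
      · rw [if_neg c2] at h1
        by_cases c3 : i = α.length + k + 1
        · rw [if_pos c3] at h1
          rw [if_neg (by omega), if_neg (by omega), if_neg (by omega),
            if_pos (by omega : i + 1 = α.length + k + 2)] at h2
          simp only [Option.some.injEq, Step.C.injEq] at h2
          exact Or.inl ⟨c3, h2.symm⟩
        · rw [if_neg c3] at h1
          by_cases c4 : i = α.length + k + 2
          · rw [if_pos c4] at h1
            exact absurd h1 (by simp)
          · rw [if_neg c4] at h1
            rw [if_neg (by omega), if_neg (by omega), if_neg (by omega),
              if_neg (by omega)] at h2
            refine Or.inr ⟨by omega, h1, ?_⟩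
            have e : i + 1 - (α.length + k + 3) = i - (α.length + k + 3) + 1 := by omega
            rw [← e]
            exact h2
  · rintro (⟨rfl, rfl⟩ | ⟨hge, he1, he2⟩)
    · constructor
      · split_ifs <;> first | rfl | omega
      · split_ifs <;> first | rfl | omega
    · constructor
      · split_ifs <;> first | exact he1 | omega
      · split_ifs <;> first | omega | skip
        have e : i + 1 - (α.length + k + 3) = i - (α.length + k + 3) + 1 := by omega
        rw [e]
        exact he2

lemma no_occ_case (P : List Step) (hP : InE P)
    (hno : ∀ i k, 2 ≤ k → ¬ OccAt P i k) :
    ∃! Q : List Step, (InE Q ∧ InJ Q) ∧ Q.length = P.length ∧ DCEquiv P Q := by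
  have hn1 : P.length ≠ 1 := InE_length_ne_one hP
  refine ⟨j1 P.length, ⟨⟨InJ1_InE (InJ1_j1 _), ⟨[], j1 P.length, by simp, InJ1_j1 _, by simp⟩⟩,
    length_j1 hn1, ?_⟩, ?_⟩
  · intro k hk i
    constructor
    · intro h
      exact absurd h (hno i k hk)
    · intro h
      exact absurd h (InJ1_no_occ (InJ1_j1 _) i k)
  · rintro R ⟨⟨hRE, hRJ⟩, hRlen, hReq⟩
    obtain ⟨L, b, hL, hb, rfl⟩ := hRJ
    cases L with
    | nil =>
      simp only [List.map_nil, List.flatten_nil, List.nil_append] at hRlen ⊢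
      exact InJ1_eq_of_length hb (InJ1_j1 _) (by rw [hRlen, length_j1 hn1])
    | cons t L2 =>
      exfalso
      obtain ⟨β, k1⟩ := t
      have ht := hL (β, k1) (List.mem_cons_self)
      have hform : (List.map (fun t => t.1 ++ Upow (t.2 + 1) ++ [Step.D, Step.C t.2])
          ((β, k1) :: L2)).flatten ++ b
          = β ++ (tail2 k1 ++ ((List.map (fun t => t.1 ++ Upow (t.2 + 1)
              ++ [Step.D, Step.C t.2]) L2).flatten ++ b)) := by
        simp [tail2, List.append_assoc]
      have hocc := (occ_block (InJ1_no_occ ht.1) k1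
        ((List.map (fun t => t.1 ++ Upow (t.2 + 1) ++ [Step.D, Step.C t.2]) L2).flatten ++ b)
        (β.length + k1 + 1) k1).mpr (Or.inl ⟨rfl, rfl⟩)
      rw [← hform] at hocc
      exact hno _ k1 ht.2 ((hReq k1 ht.2 _).mpr hocc)

lemma main_aux : ∀ n (P : List Step), P.length ≤ n → InE P →
    ∃! Q : List Step, (InE Q ∧ InJ Q) ∧ Q.length = P.length ∧ DCEquiv P Q := by
  intro n
  induction n with
  | zero =>
    intro P hlen hP
    apply no_occ_case P hP
    rintro i k hk ⟨h1, -⟩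
    obtain ⟨hi, -⟩ := List.getElem?_eq_some_iff.mp h1
    omega
  | succ n ih =>
    intro P hlen hP
    classical
    by_cases hocc : ∃ i, ∃ k, 2 ≤ k ∧ OccAt P i k
    case neg =>
      apply no_occ_case P hP
      intro i k hk h
      exact hocc ⟨i, k, hk, h⟩
    case pos =>
      obtain ⟨k0, hk0, h0⟩ := Nat.find_spec hocc
      set i0 := Nat.find hocc with hi0
      have hmin : ∀ j, j < i0 → ∀ k, 2 ≤ k → ¬ OccAt P j k := by
        intro j hj k hk h
        exact Nat.find_min hocc hj ⟨k, hk, h⟩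
      have hi1 : i0 + 1 < P.length := (List.getElem?_eq_some_iff.mp h0.2).1
      have hh1 : hgt P (i0 + 1) = (k0 : ℤ) := (hP.2.2 _ _ h0.2).2
      have hhi0 : hgt P i0 = (k0 : ℤ) + 1 := by
        have hstep : hgt P (i0 + 1) = hgt P i0 + Step.val Step.D := hgt_succ h0.1
        rw [hh1] at hstep
        simp [Step.val] at hstep
        omega
      have hile : k0 + 1 ≤ i0 := by
        have := hgt_le (P := P) (i := i0) (by omega)
        rw [hhi0] at this
        exact_mod_cast this
      have hne2 : i0 ≠ k0 + 2 := by
        intro h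
        apply hgt_ne_sub_one hP (i := i0) (by omega)
        rw [hhi0, h]
        push_cast
        ring
      set m := i0 - (k0 + 1) with hm
      have hm1 : m ≠ 1 := by omega
      have hmlen : (j1 m).length = m := length_j1 hm1
      have hhgt2 : hgt P (i0 + 2) = 0 := by
        have hstep : hgt P (i0 + 1 + 1) = hgt P (i0 + 1) + Step.val (Step.C k0) :=
          hgt_succ h0.2
        rw [hh1] at hstep
        simpa [Step.val] using hstep
      set S := P.drop (i0 + 2) with hS
      have hSE : InE S := InE_drop hP (by omega) hhgt2
      have hSlen : S.length = P.length - (i0 + 2) := by simp [hS]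
      obtain ⟨Q', ⟨⟨hQ'E, hQ'J⟩, hQ'len, hQ'eq⟩, hQ'uniq⟩ := ih S (by omega) hSE
      have hPocc : ∀ i k, 2 ≤ k →
          (OccAt P i k ↔ ((i = i0 ∧ k = k0) ∨ (i0 + 2 ≤ i ∧ OccAt S (i - (i0 + 2)) k))) := by
        intro i k hk
        constructor
        · intro h
          rcases lt_trichotomy i i0 with hlt | heq | hgt'
          · exact absurd h (hmin i hlt k hk)
          · subst heq
            have hck : Step.C k = Step.C k0 := Option.some.inj (h.2.symm.trans h0.2)
            exact Or.inl ⟨rfl, Step.C.inj hck⟩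
          · have hne : i ≠ i0 + 1 := by
              intro he
              subst he
              have : some Step.D = some (Step.C k0) := h.1.symm.trans h0.2
              simp at this
            refine Or.inr ⟨by omega, ?_, ?_⟩
            · rw [hS, List.getElem?_drop, show i0 + 2 + (i - (i0 + 2)) = i by omega]
              exact h.1
            · rw [hS, List.getElem?_drop, show i0 + 2 + (i - (i0 + 2) + 1) = i + 1 by omega]
              exact h.2
        · rintro (⟨rfl, rfl⟩ | ⟨hge, hS1, hS2⟩)
          · exact h0
          · constructor
            · rw [hS, List.getElem?_drop] at hS1
              rwa [show i0 + 2 + (i - (i0 + 2)) = i by omega] at hS1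
            · rw [hS, List.getElem?_drop] at hS2
              rwa [show i0 + 2 + (i - (i0 + 2) + 1) = i + 1 by omega] at hS2
      set Q : List Step := j1 m ++ (tail2 k0 ++ Q') with hQdef
      have hQocc : ∀ i k,
          OccAt Q i k ↔ ((i = i0 ∧ k = k0) ∨ (i0 + 2 ≤ i ∧ OccAt Q' (i - (i0 + 2)) k)) := by
        intro i k
        have hob := occ_block (InJ1_no_occ (InJ1_j1 m)) k0 Q' i k
        rw [hmlen] at hob
        rw [show m + k0 + 1 = i0 by omega, show m + k0 + 3 = i0 + 2 by omega] at hob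
        exact hob
      have hequiv : DCEquiv P Q := by
        intro k hk i
        show OccAt P i k ↔ OccAt Q i k
        rw [hPocc i k hk, hQocc i k]
        exact or_congr Iff.rfl (and_congr Iff.rfl (hQ'eq k hk (i - (i0 + 2))))
      have hQlen : Q.length = P.length := by
        rw [hQdef]
        simp only [List.length_append, hmlen, length_tail2, hQ'len, hSlen]
        omega
      have hQE : InE Q := InE_append (InJ1_InE (InJ1_j1 m)) (InE_append (InE_tail2 hk0) hQ'E)
      obtain ⟨L', b, hL', hb, hQ'form⟩ := hQ'J
      have hQJ : InJ Q := by
        refine ⟨(j1 m, k0) :: L', b, ?_, hb, ?_⟩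
        · intro u hu
          rcases List.mem_cons.mp hu with rfl | hu
          · exact ⟨InJ1_j1 m, hk0⟩
          · exact hL' u hu
        · rw [hQdef, hQ'form]
          simp [tail2, List.append_assoc]
      refine ⟨Q, ⟨⟨hQE, hQJ⟩, hQlen, hequiv⟩, ?_⟩
      rintro R ⟨⟨hRE, hRJ⟩, hRlen, hReq⟩
      obtain ⟨L, b', hL, hb', rfl⟩ := hRJ
      cases L with
      | nil =>
        exfalso
        have hocc2 := (hReq k0 hk0 i0).mp h0
        simp only [List.map_nil, List.flatten_nil, List.nil_append] at hocc2
        exact InJ1_no_occ hb' i0 k0 hocc2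
      | cons t L2 =>
        obtain ⟨β, k1⟩ := t
        have ht := hL (β, k1) (List.mem_cons_self)
        have ht1 : InJ1 β := ht.1
        have hk1 : 2 ≤ k1 := ht.2
        have hform : (List.map (fun t => t.1 ++ Upow (t.2 + 1) ++ [Step.D, Step.C t.2])
            ((β, k1) :: L2)).flatten ++ b'
            = β ++ (tail2 k1 ++ ((List.map (fun t => t.1 ++ Upow (t.2 + 1)
                ++ [Step.D, Step.C t.2]) L2).flatten ++ b')) := by
          simp [tail2, List.append_assoc]
        rw [hform] at hRE hRlen hReq ⊢
        set R' := (List.map (fun t => t.1 ++ Upow (t.2 + 1)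
          ++ [Step.D, Step.C t.2]) L2).flatten ++ b' with hR'def
        have hRocc := fun i k => occ_block (InJ1_no_occ ht1) k1 R' i k
        have hR0 : OccAt (β ++ (tail2 k1 ++ R')) i0 k0 := (hReq k0 hk0 i0).mp h0
        have hA := (hRocc i0 k0).mp hR0
        have hB0 : OccAt (β ++ (tail2 k1 ++ R')) (β.length + k1 + 1) k1 :=
          (hRocc _ k1).mpr (Or.inl ⟨rfl, rfl⟩)
        have hB := (hPocc _ k1 hk1).mp ((hReq k1 hk1 _).mpr hB0)
        have hkey : β.length + k1 + 1 = i0 ∧ k1 = k0 := by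
          rcases hA with ⟨ha1, ha2⟩ | ⟨ha1, -⟩
          · exact ⟨ha1.symm, ha2.symm⟩
          · rcases hB with ⟨hb1, hb2⟩ | ⟨hb1, -⟩
            · exact ⟨hb1, hb2⟩
            · omega
        obtain ⟨hpos, hkk⟩ := hkey
        have hβlen : β.length = m := by omega
        have hβeq : β = j1 m := InJ1_eq_of_length ht1 (InJ1_j1 m) (by rw [hmlen, hβlen])
        have hRtot : (β ++ (tail2 k1 ++ R')).length = P.length := hRlen
        have hlenR : R'.length = S.length := by
          rw [List.length_append, List.length_append, length_tail2] at hRtot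
          rw [hSlen]
          omega
        have hR'E : InE R' := by
          have hc : (β ++ (tail2 k1 ++ R'))[i0 + 1]? = some (Step.C k0) := hR0.2
          have hh : hgt (β ++ (tail2 k1 ++ R')) (i0 + 1) = (k0 : ℤ) := (hRE.2.2 _ _ hc).2
          have hs : hgt (β ++ (tail2 k1 ++ R')) (i0 + 1 + 1)
              = hgt (β ++ (tail2 k1 ++ R')) (i0 + 1) + Step.val (Step.C k0) := hgt_succ hc
          rw [hh] at hs
          have h1 : hgt (β ++ (tail2 k1 ++ R')) (i0 + 2) = 0 := by
            simpa [Step.val] using hs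
          have hdrop : (β ++ (tail2 k1 ++ R')).drop (i0 + 2) = R' := by
            rw [show β ++ (tail2 k1 ++ R') = (β ++ tail2 k1) ++ R' by
              simp [List.append_assoc]]
            apply List.drop_left'
            rw [List.length_append, length_tail2]
            omega
          rw [← hdrop]
          exact InE_drop hRE (by rw [hRtot]; omega) h1
        have hR'eq : DCEquiv S R' := by
          intro k hk j
          show OccAt S j k ↔ OccAt R' j k
          have hP' := hPocc (i0 + 2 + j) k hk
          rw [show i0 + 2 + j - (i0 + 2) = j by omega] at hP'
          have hR' := hRocc (i0 + 2 + j) k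
          rw [show i0 + 2 + j - (β.length + k1 + 3) = j by omega] at hR'
          constructor
          · intro h
            have hPmid : OccAt P (i0 + 2 + j) k := hP'.mpr (Or.inr ⟨by omega, h⟩)
            rcases hR'.mp ((hReq k hk _).mp hPmid) with ⟨hx, -⟩ | ⟨-, hx⟩
            · omega
            · exact hx
          · intro h
            have hRmid := hR'.mpr (Or.inr ⟨by omega, h⟩)
            rcases hP'.mp ((hReq k hk _).mpr hRmid) with ⟨hx, -⟩ | ⟨-, hx⟩
            · omega
            · exact hx
        have hR'J : InJ R' := ⟨L2, b', fun u hu => hL u (List.mem_cons_of_mem _ hu), hb', rfl⟩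
        have hR'Q' : R' = Q' := hQ'uniq R' ⟨⟨hR'E, hR'J⟩, hlenR, hR'eq⟩
        rw [hβeq, hkk, hR'Q', hQdef]


/-- 𝒥 is a complete set of representatives of the DC-equivalence classes of ℰ. -/
theorem J_complete_set_of_representatives_for_DCEquiv (P : List Step) (hP : InE P) :
    ∃! Q : List Step, (InE Q ∧ InJ Q) ∧ Q.length = P.length ∧ DCEquiv P Q :=
  main_aux P.length P le_rfl hP
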